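/- Let T be a finite orientation of a tree. Then T is a core (every endomorphism is an automorphism) if and only if the identity is the only endomorphism of T. -/

import Mathlib

open SimpleGraph

private lemma aux_getVert_map {V : Type} {G : SimpleGraph V} (f : G →g G) :
    ∀ {u v : V} (p : G.Walk u v) (i : ℕ), (p.map f).getVert i = f (p.getVert i) := by
  intro u v p
  induction p with
  | nil => intro i; simp [Walk.getVert]
  | cons h q ih =>
    intro i
    cases i with
    | zero => simp [Walk.getVert]
    | succ i => simpa [Walk.getVert] using ih i

private lemma aux_getVert_one_append {V : Type} {G : SimpleGraph V} {a b c : V}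
    (p : G.Walk a b) (q : G.Walk b c) (h : a ≠ b) :
    (p.append q).getVert 1 = p.getVert 1 := by
  rw [Walk.getVert_append]
  rcases lt_or_ge 1 p.length with h1 | h1
  · simp [h1]
  · have h0 : p.length ≠ 0 := fun hh => h (Walk.eq_of_length_eq_zero hh)
    have hl : p.length = 1 := by omega
    rw [if_neg (by omega), hl]
    have := p.getVert_length
    rw [hl] at this
    simp [this]

private lemma aux_reach {V : Type} {G : SimpleGraph V} {u v z : V} (p : G.Walk u v)
    (hz : z ∈ p.support) : G.Reachable u z := by
  induction p with
  | nil => simp at hz; subst hz; rfl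
  | cons h q ih =>
    rw [Walk.support_cons] at hz
    rcases List.mem_cons.mp hz with rfl | hz
    · rfl
    · exact (Reachable.mono le_rfl ⟨Walk.cons h Walk.nil⟩).trans (ih hz)

private lemma aux_dist_getVert {V : Type} {G : SimpleGraph V} (hc : G.Connected)
    {u v : V} (p : G.Walk u v) : ∀ j, j ≤ p.length → ∀ i, i ≤ j →
    G.dist (p.getVert i) (p.getVert j) ≤ j - i := by
  intro j
  induction j with
  | zero => intro _ i hi; simp_all
  | succ j ih =>
    intro hj i hi
    rcases Nat.lt_or_ge j i with h' | h'
    · have : i = j + 1 := by omega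
      subst this; simp
    · have h1 := ih (by omega) i h'
      have h2 : G.dist (p.getVert j) (p.getVert (j + 1)) ≤ 1 := by
        have := G.dist_le (Walk.cons (p.adj_getVert_succ (i := j) (by omega)) Walk.nil)
        simpa using this
      have := hc.dist_triangle (u := p.getVert i) (v := p.getVert j) (w := p.getVert (j+1))
      omega

private lemma aux_append_isPath {V : Type} {G : SimpleGraph V}
    (hac : G.IsAcyclic) {a b c : V}
    (p : G.Walk a b) (q : G.Walk b c) (hp : p.IsPath) (hq : q.IsPath)
    (hne : p.getVert (p.length - 1) ≠ q.getVert 1) :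
    (p.append q).IsPath := by
  classical
  rw [Walk.isPath_def, Walk.support_append]
  refine List.Nodup.append hp.support_nodup ?_ ?_
  · have := hq.support_nodup
    rw [q.support_eq_cons] at this
    exact this.of_cons
  · intro z hz1 hz2
    have hzq : z ∈ q.support := List.mem_of_mem_tail hz2
    have hzb : z ≠ b := by
      intro rfl_
      subst rfl_
      have := hq.support_nodup
      rw [q.support_eq_cons] at this
      exact (List.nodup_cons.mp this).1 hz2
    have hzr : z ∈ p.reverse.support := by
      rw [Walk.support_reverse]; exact List.mem_reverse.mpr hz1
    set A := p.reverse.takeUntil z hzr with hA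
    set B := q.takeUntil z hzq with hB
    have hAp : A.IsPath := hp.reverse.takeUntil hzr
    have hBp : B.IsPath := hq.takeUntil hzq
    have hABeq : A = B := by
      have := hac.path_unique ⟨A, hAp⟩ ⟨B, hBp⟩
      exact congrArg Subtype.val this
    have e1 : p.reverse.getVert 1 = A.getVert 1 := by
      conv_lhs => rw [← p.reverse.take_spec hzr]
      exact aux_getVert_one_append _ _ (Ne.symm hzb)
    have e2 : q.getVert 1 = B.getVert 1 := by
      conv_lhs => rw [← q.take_spec hzq]
      exact aux_getVert_one_append _ _ (Ne.symm hzb)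
    apply hne
    rw [← Walk.getVert_reverse, e1, hABeq, ← e2]

/-- Let `T` be a finite orientation of a tree (digraph `E` on `V` whose underlying
undirected graph `G` is a tree, each undirected edge oriented in exactly one
direction). Then `T` is a core (every endomorphism is an automorphism) iff the
identity is the only endomorphism of `T`. -/
theorem stmt13 {V : Type} [Fintype V] (E : V → V → Prop)
    (G : SimpleGraph V) (hG : ∀ a b, G.Adj a b ↔ (E a b ∨ E b a))
    (htree : G.IsTree)
    (hanti : ∀ a b, E a b → ¬ E b a) :
    (∀ φ : V → V, (∀ a b, E a b → E (φ a) (φ b)) →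
        Function.Bijective φ ∧ ∀ a b, E (φ a) (φ b) → E a b) ↔
    (∀ φ : V → V, (∀ a b, E a b → E (φ a) (φ b)) → φ = id) := by
  classical
  constructor
  · intro h φ hφ
    by_contra hne
    obtain ⟨x0, hx0⟩ : ∃ x, φ x ≠ x := by
      by_contra hh
      push_neg at hh
      exact hne (funext fun x => hh x)
    have hinj : Function.Injective φ := (h φ hφ).1.injective
    have hadj : ∀ a b, G.Adj a b → G.Adj (φ a) (φ b) := by
      intro a b hab
      rw [hG] at hab ⊢
      rcases hab with h1 | h1
      · exact Or.inl (hφ _ _ h1)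
      · exact Or.inr (hφ _ _ h1)
    have hconn : G.Connected := htree.isConnected
    have hbridge : ∀ u v, G.Adj u v → ¬ (G.deleteEdges {s(u,v)}).Reachable u v := by
      intro u v huv
      have hb := (isAcyclic_iff_forall_edge_isBridge.mp htree.IsAcyclic)
        (G.mem_edgeSet.mpr huv)
      rw [isBridge_iff] at hb
      exact hb
    by_cases hfix : ∃ s, φ s = s
    · -- Case A : φ has a fixed point; build a non-injective endomorphism
      obtain ⟨s, hs⟩ := hfix
      have key : ∀ (u x : V) (W : G.Walk u x), φ u = u → φ x ≠ x →
          ∃ p a, G.Adj p a ∧ φ p = p ∧ φ a ≠ a := by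
        intro u x W
        induction W with
        | nil => intro h1 h2; exact absurd h1 h2
        | @cons u t x hadj' q ih =>
          intro h1 h2
          by_cases ht : φ t = t
          · exact ih ht h2
          · exact ⟨u, t, hadj', h1, ht⟩
      obtain ⟨p, a, hpa, hp, ha⟩ :=
        key s x0 (hconn.preconnected s x0).some hs hx0
      set G' := G.deleteEdges {s(p,a)} with hG'def
      have hB_not_p : ¬ G'.Reachable a p := fun hr => hbridge p a hpa hr.symm
      have hBa : G'.Reachable a a := Reachable.refl a
      have hcross : ∀ x y, G.Adj x y → G'.Reachable a x → ¬ G'.Reachable a y →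
          x = a ∧ y = p := by
        intro x y hxy hx hy
        by_cases he : s(x,y) = s(p,a)
        · rw [Sym2.eq_iff] at he
          rcases he with ⟨rfl, rfl⟩ | ⟨rfl, rfl⟩
          · exact absurd hx hB_not_p
          · exact ⟨rfl, rfl⟩
        · have : G'.Adj x y := by
            rw [hG'def, SimpleGraph.deleteEdges_adj]
            exact ⟨hxy, by simpa using he⟩
          exact absurd (hx.trans ⟨Walk.cons this Walk.nil⟩) (by simpa using hy)
      have hpfa : G.Adj p (φ a) := by
        have := hadj p a hpa
        rwa [hp] at this
      have hfa : ¬ G'.Reachable a (φ a) := by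
        intro hr
        obtain ⟨W⟩ := hr
        have hWG := W.map (Hom.ofLE (G.deleteEdges_le {s(p,a)}))
        set WG : G.Walk a (φ a) :=
          W.map (Hom.ofLE (G.deleteEdges_le {s(p,a)})) with hWGdef
        have hWGedges : ∀ e, e ∈ WG.edges → e ∈ W.edges := by
          intro e he
          rw [hWGdef, Walk.edges_map] at he
          obtain ⟨e', he', rfl⟩ := List.mem_map.mp he
          simpa [Hom.ofLE_apply, Sym2.map_id'] using he'
        have hnotin : s(p, φ a) ∉ WG.edges := by
          intro hin
          have hpW : p ∈ W.support := W.fst_mem_support_of_mem_edges (hWGedges _ hin)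
          exact hB_not_p (aux_reach W hpW)
        have W2 := WG.toDeleteEdge s(p, φ a) hnotin
        have hadj2 : (G.deleteEdges {s(p, φ a)}).Adj p a := by
          rw [SimpleGraph.deleteEdges_adj]
          refine ⟨hpa, ?_⟩
          simp only [Set.mem_singleton_iff, Sym2.eq_iff]
          rintro (⟨-, h2⟩ | ⟨h1, rfl⟩)
          · exact ha h2.symm
          · exact ha (h1.symm.trans rfl) -- p = φ a and a = p ⇒ φ a = a
        exact hbridge p (φ a) hpfa ⟨Walk.cons hadj2 W2⟩
      set ψ : V → V := fun u => if G'.Reachable a u then φ u else u with hψdef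
      have hψhom : ∀ x y, E x y → E (ψ x) (ψ y) := by
        intro x y hxy
        have hxyA : G.Adj x y := (hG x y).mpr (Or.inl hxy)
        by_cases hx : G'.Reachable a x <;> by_cases hy : G'.Reachable a y <;>
          simp only [hψdef, hx, hy, if_pos, if_neg, if_true, if_false]
        · exact hφ _ _ hxy
        · obtain ⟨rfl, rfl⟩ := hcross x y hxyA hx hy
          have := hφ _ _ hxy
          rwa [hp] at this
        · obtain ⟨rfl, rfl⟩ := hcross y x hxyA.symm hy hx
          have := hφ _ _ hxy
          rwa [hp] at this
        · exact hxy
      have hbij := (h ψ hψhom).1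
      have h1 : ψ a = φ a := if_pos hBa
      have h2 : ψ (φ a) = φ a := if_neg hfa
      exact ha (hbij.injective (h1.trans h2.symm)).symm
    · -- Case B : φ has no fixed point; translation along an axis gives an
      -- arbitrarily long path, contradiction with finiteness
      push_neg at hfix
      obtain ⟨v, -, hv⟩ := Finset.exists_min_image Finset.univ
        (fun x => G.dist x (φ x)) ⟨x0, Finset.mem_univ x0⟩
      set k := G.dist v (φ v) with hkdef
      have hk1 : 1 ≤ k := hconn.pos_dist_of_ne (fun hh => hfix v hh.symm)
      have hmin : ∀ x, k ≤ G.dist x (φ x) := fun x => hv x (Finset.mem_univ x)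
      obtain ⟨P, hP, hPlen⟩ := (hconn.preconnected v (φ v)).exists_path_of_dist
      rw [← hkdef] at hPlen
      have hφn : ∀ n (a b : V), E a b → E (φ^[n] a) (φ^[n] b) := by
        intro n
        induction n with
        | zero => intro a b hab; simpa using hab
        | succ n ih =>
          intro a b hab
          rw [Function.iterate_succ_apply', Function.iterate_succ_apply']
          exact hφ _ _ (ih a b hab)
      have hadjn : ∀ n, ∀ {a b : V}, G.Adj a b → G.Adj (φ^[n] a) (φ^[n] b) := by
        intro n a b hab
        rw [hG] at hab ⊢
        rcases hab with h1 | h1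
        · exact Or.inl (hφn n _ _ h1)
        · exact Or.inr (hφn n _ _ h1)
      have hkey : P.getVert (P.length - 1) ≠ φ (P.getVert 1) := by
        intro heq
        rcases Nat.lt_or_ge k 2 with hk2 | hk2
        · have hk : k = 1 := by omega
          have hL : P.length = 1 := by rw [hPlen, hk]
          have hg1 : P.getVert 1 = φ v := by
            have := P.getVert_length
            rwa [hL] at this
          rw [hL, hg1] at heq
          simp only [Nat.sub_self, Walk.getVert_zero] at heq
          -- heq : v = φ (φ v)
          have hadj' : G.Adj v (φ v) := by
            have := P.adj_getVert_succ (i := 0) (by omega)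
            rwa [Walk.getVert_zero, hg1] at this
          rw [hG] at hadj'
          rcases hadj' with hE | hE
          · have := hφ _ _ hE
            rw [← heq] at this
            exact hanti _ _ hE this
          · have := hφ _ _ hE
            rw [← heq] at this
            exact hanti _ _ hE this
        · have h1 : G.dist (P.getVert 1) (P.getVert (P.length - 1)) ≤ (P.length - 1) - 1 :=
            aux_dist_getVert hconn P (P.length - 1) (by omega) 1 (by omega)
          rw [heq] at h1
          have h2 := hmin (P.getVert 1)
          rw [hPlen] at h1
          omega
      have main : ∀ n : ℕ, ∃ q : G.Walk v (φ^[n+1] v), q.IsPath ∧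
          q.length = (n+1) * k ∧
          q.getVert (q.length - 1) = φ^[n] (P.getVert (P.length - 1)) := by
        intro n
        induction n with
        | zero =>
          refine ⟨P.copy rfl (by simp), ?_, ?_, ?_⟩
          · simpa using hP
          · simpa using hPlen
          · simp
        | succ n ih =>
          obtain ⟨q, hq, hqlen, hqpen⟩ := ih
          set fh : G →g G := ⟨φ^[n+1], fun hab => hadjn (n+1) hab⟩ with hfhdef
          set Pn : G.Walk (φ^[n+1] v) (φ^[n+2] v) :=
            (P.map fh).copy rfl (Function.iterate_succ_apply φ (n+1) v).symm with hPndef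
          have hPnpath : Pn.IsPath := by
            rw [hPndef]
            rw [Walk.isPath_copy]
            exact Walk.map_isPath_of_injective (hinj.iterate (n+1)) hP
          have hPnlen : Pn.length = k := by
            rw [hPndef, Walk.length_copy, Walk.length_map, hPlen]
          have hPn1 : Pn.getVert 1 = φ^[n+1] (P.getVert 1) := by
            rw [hPndef]
            rw [Walk.getVert_copy]
            exact aux_getVert_map fh P 1
          have hPnpen : ∀ i, Pn.getVert i = φ^[n+1] (P.getVert i) := by
            intro i
            rw [hPndef, Walk.getVert_copy]
            exact aux_getVert_map fh P i
          refine ⟨q.append Pn, ?_, ?_, ?_⟩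
          · apply aux_append_isPath htree.IsAcyclic q Pn hq hPnpath
            rw [hqpen, hPn1]
            intro hcontra
            rw [Function.iterate_succ_apply] at hcontra
            exact hkey (hinj.iterate n hcontra)
          · rw [Walk.length_append, hqlen, hPnlen]; ring
          · rw [Walk.length_append, hqlen, hPnlen]
            have hidx : (n+1) * k + k - 1 = q.length + (k - 1) := by
              rw [hqlen]; omega
            rw [hidx, Walk.getVert_append, if_neg (by omega)]
            have : q.length + (k - 1) - q.length = k - 1 := by omega
            rw [this, hPnpen, ← hPlen]
      obtain ⟨q, hq, hqlen, -⟩ := main (Fintype.card V)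
      have hlt := hq.length_lt
      have : Fintype.card V + 1 ≤ (Fintype.card V + 1) * k :=
        Nat.le_mul_of_pos_right _ (by omega)
      omega
  · intro h φ hφ
    have hid := h φ hφ
    subst hid
    exact ⟨Function.bijective_id, fun a b hab => hab⟩
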